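/- Let G be an internally triangulated plane graph (every internal face is a triangle) whose external boundary is a simple cycle C with at least 4 vertices. Then G is 3-connected if and only if no edge of G connects two non-consecutive vertices of C. -/

import Mathlib

theorem Equiv.Perm.apply_inv_self {α : Type*} (f : Equiv.Perm α) (x : α) : f (f⁻¹ x) = x :=
  f.apply_symm_apply x

theorem Equiv.Perm.inv_apply_self {α : Type*} (f : Equiv.Perm α) (x : α) : f⁻¹ (f x) = x :=
  f.symm_apply_apply x
open Classical

noncomputable section ChordAux

structure PMap where
  V : Type
  D : Type
  fV : Fintype V
  fD : Fintype D
  sig : Equiv.Perm D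
  alf : Equiv.Perm D
  vtx : D → V
  d0 : D
  hinv : ∀ d, alf (alf d) = d
  hnf : ∀ d, alf d ≠ d
  hvσ : ∀ d, vtx (sig d) = vtx d
  hsurj : Function.Surjective vtx
  hfib : ∀ d e, vtx d = vtx e → ∃ n : ℕ, (sig ^ n) d = e
  hconn : ∀ d e : D, Relation.ReflTransGen (fun a b => sig a = b ∨ alf a = b) d e
  heuler : (Fintype.card V : ℤ)
      - (Nat.card (Quot (fun a b : D => alf a = b)) : ℤ)
      + (Nat.card (Quot (fun a b : D => (sig * alf) a = b)) : ℤ) = 2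
  hnoloop : ∀ d : D, vtx (alf d) ≠ vtx d
  hsimple : ∀ d e : D, vtx d = vtx e → vtx (alf d) = vtx (alf e) → e = d
  hint_tri : ∀ d : D, (¬ ∃ n : ℕ, ((sig * alf) ^ n) d0 = d) →
      ((sig * alf) ^ 3) d = d ∧ (sig * alf) d ≠ d
  houter_simple : ∀ d e : D, (∃ n : ℕ, ((sig * alf) ^ n) d0 = d) →
      (∃ n : ℕ, ((sig * alf) ^ n) d0 = e) → vtx d = vtx e → d = e

attribute [instance] PMap.fV PMap.fD

-- generic chain lemma
section
-- generic chain lemma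
lemma chain_rtg {X : Type} (r : X → X → Prop) (f : ℕ → X) (a b : ℕ) (hab : a ≤ b)
    (h : ∀ t, a ≤ t → t < b → r (f t) (f (t + 1))) :
    Relation.ReflTransGen r (f a) (f b) := by
  induction b, hab using Nat.le_induction with
  | base => exact Relation.ReflTransGen.refl
  | succ b hab ih =>
    exact Relation.ReflTransGen.tail
      (ih fun t h1 h2 => h t h1 (by omega)) (h b hab (by omega))
end

-- general graph helpers
lemma reach_of_induce {V : Type} (G : SimpleGraph V) (s : Set V)
    (h : (G.induce s).Connected) (a b : V) (ha : a ∈ s) (hb : b ∈ s) :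
    Relation.ReflTransGen (fun u v => G.Adj u v ∧ u ∈ s ∧ v ∈ s) a b := by
  obtain ⟨w⟩ := h.preconnected ⟨a, ha⟩ ⟨b, hb⟩
  have : ∀ (x y : s) (w : (G.induce s).Walk x y),
      Relation.ReflTransGen (fun u v => G.Adj u v ∧ u ∈ s ∧ v ∈ s) x y := by
    intro x y w
    induction w with
    | nil => exact Relation.ReflTransGen.refl
    | cons hadj _ ih =>
      refine Relation.ReflTransGen.head ?_ ih
      rename_i u v _ _
      exact ⟨hadj, u.2, v.2⟩
  exact this _ _ w

lemma induce_of_reach {V : Type} (G : SimpleGraph V) (s : Set V)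
    (hne : s.Nonempty)
    (h : ∀ a b, a ∈ s → b ∈ s →
      Relation.ReflTransGen (fun u v => G.Adj u v ∧ u ∈ s ∧ v ∈ s) a b) :
    (G.induce s).Connected := by
  have hne' : Nonempty s := ⟨⟨hne.choose, hne.choose_spec⟩⟩
  refine SimpleGraph.Connected.mk ?_
  rintro ⟨a, ha⟩ ⟨b, hb⟩
  have key : ∀ a b, Relation.ReflTransGen (fun u v => G.Adj u v ∧ u ∈ s ∧ v ∈ s) a b →
      ∀ (ha : a ∈ s) (hb : b ∈ s), (G.induce s).Reachable ⟨a, ha⟩ ⟨b, hb⟩ := by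
    intro a b hr
    induction hr with
    | refl => intro _ _; rfl
    | tail _ hstep ih =>
      intro ha hb
      obtain ⟨hadj, hc, _⟩ := hstep
      exact (ih ha hc).trans (SimpleGraph.Adj.reachable (by exact hadj))
  exact key a b (h a b ha hb) ha hb

namespace PMap

variable (M : PMap)

def phi : Equiv.Perm M.D := M.sig * M.alf

def outer (d : M.D) : Prop := ∃ n : ℕ, (M.phi ^ n) M.d0 = d

def bnd (v : M.V) : Prop := ∃ d, M.outer d ∧ M.vtx d = v

def G : SimpleGraph M.V :=
  SimpleGraph.fromRel (fun a b => ∃ d, M.vtx d = a ∧ M.vtx (M.alf d) = b)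

variable {M}

lemma phi_apply (d : M.D) : M.phi d = M.sig (M.alf d) := rfl

lemma vtx_phi (d : M.D) : M.vtx (M.phi d) = M.vtx (M.alf d) := M.hvσ _

lemma vtx_sig_pow (n : ℕ) (d : M.D) : M.vtx ((M.sig ^ n) d) = M.vtx d := by
  induction n with
  | zero => rfl
  | succ n ih => rw [pow_succ', Equiv.Perm.mul_apply, M.hvσ, ih]

lemma vtx_sig_inv (d : M.D) : M.vtx (M.sig⁻¹ d) = M.vtx d := by
  conv_rhs => rw [show d = M.sig (M.sig⁻¹ d) by simp]
  rw [M.hvσ]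

lemma outer_phi {d : M.D} (h : M.outer d) : M.outer (M.phi d) := by
  obtain ⟨n, rfl⟩ := h
  exact ⟨n + 1, by rw [pow_succ', Equiv.Perm.mul_apply]⟩

lemma outer_phi_pow {d : M.D} (n : ℕ) (h : M.outer d) : M.outer ((M.phi ^ n) d) := by
  induction n with
  | zero => simpa
  | succ n ih => rw [pow_succ', Equiv.Perm.mul_apply]; exact outer_phi ih

lemma outer_pre {d : M.D} (h : M.outer (M.phi d)) : M.outer d := by
  obtain ⟨n, hn⟩ := h
  refine ⟨n + (orderOf M.phi - 1), ?_⟩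
  have hord : 0 < orderOf M.phi := orderOf_pos _
  have h1 : M.phi ^ orderOf M.phi = 1 := pow_orderOf_eq_one _
  have : M.phi ((M.phi ^ (n + (orderOf M.phi - 1))) M.d0) = M.phi d := by
    rw [← Equiv.Perm.mul_apply, ← pow_succ']
    have : orderOf M.phi - 1 + 1 = orderOf M.phi := Nat.succ_pred_eq_of_pos hord
    rw [show n + (orderOf M.phi - 1) + 1 = n + orderOf M.phi by omega,
      pow_add, h1, mul_one, hn]
  exact M.phi.injective this

lemma outer_pre_pow {d : M.D} (n : ℕ) (h : M.outer ((M.phi ^ n) d)) : M.outer d := by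
  induction n with
  | zero => simpa using h
  | succ n ih => rw [pow_succ', Equiv.Perm.mul_apply] at h; exact ih (outer_pre h)

lemma adj_dart (d : M.D) : M.G.Adj (M.vtx d) (M.vtx (M.alf d)) := by
  refine ⟨(M.hnoloop d).symm, Or.inl ⟨d, rfl, rfl⟩⟩

lemma adj_norm {a b : M.V} (h : M.G.Adj a b) :
    ∃ d, M.vtx d = a ∧ M.vtx (M.alf d) = b := by
  obtain ⟨-, h | h⟩ := h
  · exact h
  · obtain ⟨d, hd1, hd2⟩ := h
    exact ⟨M.alf d, hd2, by rwa [M.hinv]⟩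

lemma tri_adj {d : M.D} (h : ¬ M.outer (M.alf d)) :
    M.G.Adj (M.vtx (M.alf d)) (M.vtx (M.alf (M.sig d))) := by
  have htri := (M.hint_tri (M.alf d) h).1
  -- phi (alf d) = sig d, phi (sig d) = sig (alf (sig d)),
  -- phi (sig (alf (sig d))) = alf d
  have h1 : M.phi (M.alf d) = M.sig d := by rw [phi_apply, M.hinv]
  have h3 : M.phi (M.sig (M.alf (M.sig d))) = M.alf d := by
    have : ((M.phi ^ 3)) (M.alf d) = M.alf d := htri
    rw [pow_succ, pow_succ, pow_one, Equiv.Perm.mul_apply, Equiv.Perm.mul_apply,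
      h1] at this
    rw [show M.phi (M.sig d) = M.sig (M.alf (M.sig d)) from rfl] at this
    exact this
  set w := M.sig (M.alf (M.sig d)) with hw
  have hvw : M.vtx w = M.vtx (M.alf (M.sig d)) := M.hvσ _
  have hvaw : M.vtx (M.alf w) = M.vtx (M.alf d) := by
    have : M.sig (M.alf w) = M.alf d := h3
    have : M.alf w = M.sig⁻¹ (M.alf d) := by
      rw [← this]; simp
    rw [this, vtx_sig_inv]
  have := adj_dart w
  rw [hvw, hvaw] at this
  exact this.symm

lemma outer_unique {d e : M.D} (hd : M.outer d) (he : M.outer e)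
    (h : M.vtx d = M.vtx e) : d = e := M.houter_simple d e hd he h

/-- predecessor outer dart and the "gap" dart at a boundary vertex -/
def gd (o : M.D) : M.D := M.alf (M.phi⁻¹ o)

lemma outer_phi_inv {o : M.D} (h : M.outer o) : M.outer (M.phi⁻¹ o) := by
  apply outer_pre (d := M.phi⁻¹ o); simpa

lemma vtx_gd (o : M.D) : M.vtx (M.gd o) = M.vtx o := by
  have := vtx_phi (M := M) (M.phi⁻¹ o)
  simp only [Equiv.Perm.apply_inv_self] at this
  exact (this ▸ rfl : M.vtx (M.alf (M.phi⁻¹ o)) = M.vtx o)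

lemma sig_gd (o : M.D) : M.sig (M.gd o) = o := by
  show M.sig (M.alf (M.phi⁻¹ o)) = o
  rw [← phi_apply, Equiv.Perm.apply_inv_self]

lemma bad_dart {o d : M.D} (ho : M.outer o) (hv : M.vtx d = M.vtx o)
    (hbad : M.outer (M.alf d)) : d = M.gd o := by
  have h1 : M.phi (M.alf d) = M.sig d := by rw [phi_apply, M.hinv]
  have h2 : M.outer (M.sig d) := h1 ▸ outer_phi hbad
  have h3 : M.sig d = o := outer_unique h2 ho (by rw [M.hvσ, hv])
  show d = M.alf (M.phi⁻¹ o)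
  rw [← h3, ← h1, Equiv.Perm.inv_apply_self, M.hinv]

lemma interior_no_bad {d : M.D} (h : ¬ M.bnd (M.vtx d)) : ¬ M.outer (M.alf d) := by
  intro hbad
  have h1 : M.phi (M.alf d) = M.sig d := by rw [phi_apply, M.hinv]
  exact h ⟨M.sig d, h1 ▸ outer_phi hbad, M.hvσ d⟩


/-- minimal period of a dart under the vertex rotation -/
def mp (M : PMap) (g : M.D) : ℕ := Function.minimalPeriod M.sig g

lemma mp_pos (g : M.D) : 0 < M.mp g := by
  apply Function.IsPeriodicPt.minimalPeriod_pos (n := orderOf M.sig) (orderOf_pos _)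
  show Function.IsPeriodicPt _ _ _
  unfold Function.IsPeriodicPt Function.IsFixedPt
  rw [Equiv.Perm.iterate_eq_pow, pow_orderOf_eq_one]
  rfl

lemma sig_mp (g : M.D) : (M.sig ^ M.mp g) g = g := by
  have := Function.isPeriodicPt_minimalPeriod M.sig g
  unfold Function.IsPeriodicPt Function.IsFixedPt at this
  rwa [Equiv.Perm.iterate_eq_pow] at this

lemma sig_pow_mod (g : M.D) (n : ℕ) : (M.sig ^ (n % M.mp g)) g = (M.sig ^ n) g := by
  have := Function.iterate_mod_minimalPeriod_eq (f := ⇑M.sig) (x := g) (n := n)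
  rwa [Equiv.Perm.iterate_eq_pow, Equiv.Perm.iterate_eq_pow] at this

lemma index_exists (g d : M.D) (h : M.vtx d = M.vtx g) :
    ∃ t, 1 ≤ t ∧ t ≤ M.mp g ∧ (M.sig ^ t) g = d := by
  obtain ⟨n, hn⟩ := M.hfib g d h.symm
  rcases Nat.eq_zero_or_pos (n % M.mp g) with h0 | h0
  · refine ⟨M.mp g, mp_pos g, le_refl _, ?_⟩
    rw [sig_mp]
    rw [← hn, ← sig_pow_mod g n, h0, pow_zero]; rfl
  · exact ⟨n % M.mp g, h0, le_of_lt (Nat.mod_lt _ (mp_pos g)), by rw [sig_pow_mod, hn]⟩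

lemma index_inj {g : M.D} {s t : ℕ} (hs1 : 1 ≤ s) (hs2 : s ≤ M.mp g)
    (ht1 : 1 ≤ t) (ht2 : t ≤ M.mp g) (h : (M.sig ^ s) g = (M.sig ^ t) g) : s = t := by
  have hinj := Function.iterate_injOn_Iio_minimalPeriod (f := ⇑M.sig) (x := g)
  have hmod : (M.sig ^ (s % M.mp g)) g = (M.sig ^ (t % M.mp g)) g := by
    rw [sig_pow_mod, sig_pow_mod, h]
  have : s % M.mp g = t % M.mp g := by
    apply hinj (Set.mem_Iio.2 (Nat.mod_lt _ (mp_pos g))) (Set.mem_Iio.2 (Nat.mod_lt _ (mp_pos g)))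
    show (⇑M.sig)^[s % _] g = (⇑M.sig)^[t % _] g
    rw [Equiv.Perm.iterate_eq_pow, Equiv.Perm.iterate_eq_pow]
    exact hmod
  rcases eq_or_lt_of_le hs2 with rfl | hs2'
  · rcases eq_or_lt_of_le ht2 with rfl | ht2'
    · rfl
    · rw [Nat.mod_self] at this
      have := this.symm
      rw [Nat.mod_eq_of_lt ht2'] at this
      omega
  · rw [Nat.mod_eq_of_lt hs2'] at this
    rcases eq_or_lt_of_le ht2 with rfl | ht2'
    · rw [Nat.mod_self] at this; omega
    · rw [Nat.mod_eq_of_lt ht2'] at this; omega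

/-- injectivity of neighbours around a vertex -/
lemma nb_inj {g : M.D} {s t : ℕ} (hs1 : 1 ≤ s) (hs2 : s ≤ M.mp g)
    (ht1 : 1 ≤ t) (ht2 : t ≤ M.mp g)
    (h : M.vtx (M.alf ((M.sig ^ s) g)) = M.vtx (M.alf ((M.sig ^ t) g))) : s = t := by
  refine index_inj hs1 hs2 ht1 ht2 ?_
  exact (M.hsimple ((M.sig ^ s) g) ((M.sig ^ t) g) (by rw [vtx_sig_pow, vtx_sig_pow]) h).symm

/-- the relation of stepping inside `V ∖ {x, z}` -/
def rel2 (M : PMap) (x z : M.V) (u v : M.V) : Prop :=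
  M.G.Adj u v ∧ u ≠ x ∧ u ≠ z ∧ v ≠ x ∧ v ≠ z

lemma rel2_symm {x z : M.V} {u v : M.V} (h : rel2 M x z u v) : rel2 M x z v u :=
  ⟨h.1.symm, h.2.2.2.1, h.2.2.2.2, h.2.1, h.2.2.1⟩

lemma rtg_rel2_symm {x z : M.V} {u v : M.V}
    (h : Relation.ReflTransGen (rel2 M x z) u v) :
    Relation.ReflTransGen (rel2 M x z) v u := by
  induction h with
  | refl => exact .refl
  | tail _ hstep ih => exact Relation.ReflTransGen.trans (.single (rel2_symm hstep)) ih

lemma core {z x : M.V} {g : M.D} (hg : M.vtx g = z)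
    (hgap : ∀ t, 1 ≤ t → t < M.mp g → ¬ M.outer (M.alf ((M.sig ^ t) g)))
    (s t : ℕ) (hs : 1 ≤ s) (hst : s ≤ t) (htm : t ≤ M.mp g)
    (hx : ∀ r, s ≤ r → r ≤ t → M.vtx (M.alf ((M.sig ^ r) g)) ≠ x) :
    Relation.ReflTransGen (rel2 M x z)
      (M.vtx (M.alf ((M.sig ^ s) g))) (M.vtx (M.alf ((M.sig ^ t) g))) := by
  refine chain_rtg _ (fun r => M.vtx (M.alf ((M.sig ^ r) g))) s t hst ?_
  intro r hr1 hr2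
  have hadj : M.G.Adj (M.vtx (M.alf ((M.sig ^ r) g)))
      (M.vtx (M.alf ((M.sig ^ (r + 1)) g))) := by
    have := tri_adj (d := (M.sig ^ r) g) (hgap r (by omega) (by omega))
    rwa [show M.sig ((M.sig ^ r) g) = (M.sig ^ (r + 1)) g by
      rw [pow_succ', Equiv.Perm.mul_apply]] at this
  have hz : ∀ r' : ℕ, M.vtx (M.alf ((M.sig ^ r') g)) ≠ z := by
    intro r'
    have := M.hnoloop ((M.sig ^ r') g)
    rwa [vtx_sig_pow, hg] at this
  exact ⟨hadj, hx r (by omega) (by omega), hz r, hx (r+1) (by omega) (by omega), hz (r+1)⟩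

def NoChord (M : PMap) : Prop :=
  ∀ u v : M.V, M.bnd u → M.bnd v → M.G.Adj u v →
    ∃ d, M.outer d ∧ ((M.vtx d = u ∧ M.vtx (M.alf d) = v) ∨
      (M.vtx d = v ∧ M.vtx (M.alf d) = u))

lemma link_core {z x : M.V} {g : M.D} (hg : M.vtx g = z)
    (hgap : ∀ t, 1 ≤ t → t < M.mp g → ¬ M.outer (M.alf ((M.sig ^ t) g)))
    (lo hi : ℕ) (hlo : 1 ≤ lo) (hhi : hi ≤ M.mp g)
    (hxfree : ∀ r, lo ≤ r → r ≤ hi → M.vtx (M.alf ((M.sig ^ r) g)) ≠ x)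
    {p q : M.V}
    (hp : ∃ s, lo ≤ s ∧ s ≤ hi ∧ M.vtx (M.alf ((M.sig ^ s) g)) = p)
    (hq : ∃ s, lo ≤ s ∧ s ≤ hi ∧ M.vtx (M.alf ((M.sig ^ s) g)) = q) :
    Relation.ReflTransGen (rel2 M x z) p q := by
  obtain ⟨s, hs1, hs2, rfl⟩ := hp
  obtain ⟨t, ht1, ht2, rfl⟩ := hq
  rcases le_total s t with h | h
  · exact core hg hgap s t (by omega) h (by omega)
      (fun r h1 h2 => hxfree r (by omega) (by omega))
  · exact rtg_rel2_symm (core hg hgap t s (by omega) h (by omega)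
      (fun r h1 h2 => hxfree r (by omega) (by omega)))

lemma link_connect (hnc : M.NoChord) (z x : M.V)
    (hcase : ¬ M.bnd z ∨ (M.bnd z ∧ M.bnd x))
    (p q : M.V) (hzp : M.G.Adj z p) (hzq : M.G.Adj z q)
    (hpx : p ≠ x) (hqx : q ≠ x) :
    Relation.ReflTransGen (rel2 M x z) p q := by
  obtain ⟨dp, hdp1, hdp2⟩ := adj_norm hzp
  obtain ⟨dq, hdq1, hdq2⟩ := adj_norm hzq
  rcases hcase with hint | ⟨hbz, hbx⟩
  · -- z is an interior vertex
    by_cases hxn : ∃ dx, M.vtx dx = z ∧ M.vtx (M.alf dx) = x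
    · obtain ⟨g, hg1, hg2⟩ := hxn
      have hgap : ∀ t, 1 ≤ t → t < M.mp g → ¬ M.outer (M.alf ((M.sig ^ t) g)) := by
        intro t _ _
        apply interior_no_bad
        rwa [vtx_sig_pow, hg1]
      have hnm : M.vtx (M.alf ((M.sig ^ M.mp g) g)) = x := by rw [sig_mp, hg2]
      refine link_core hg1 hgap 1 (M.mp g - 1) le_rfl (by omega) ?_ ?_ ?_
      · intro r h1 h2 hrx
        have : r = M.mp g := nb_inj h1 (by omega) (mp_pos g) le_rfl (by rw [hrx, hnm])
        have := mp_pos (M := M) g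
        omega
      · obtain ⟨t, ht1, ht2, ht3⟩ := index_exists g dp (by rw [hdp1, hg1])
        refine ⟨t, ht1, ?_, by rw [ht3, hdp2]⟩
        rcases eq_or_lt_of_le ht2 with rfl | h
        · exact absurd (by rw [ht3, hdp2] at hnm; exact hnm) hpx
        · omega
      · obtain ⟨t, ht1, ht2, ht3⟩ := index_exists g dq (by rw [hdq1, hg1])
        refine ⟨t, ht1, ?_, by rw [ht3, hdq2]⟩
        rcases eq_or_lt_of_le ht2 with rfl | h
        · exact absurd (by rw [ht3, hdq2] at hnm; exact hnm) hqx
        · omega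
    · have hg1 : M.vtx dp = z := hdp1
      have hgap : ∀ t, 1 ≤ t → t < M.mp dp → ¬ M.outer (M.alf ((M.sig ^ t) dp)) := by
        intro t _ _
        apply interior_no_bad
        rwa [vtx_sig_pow, hg1]
      refine link_core hg1 hgap 1 (M.mp dp) le_rfl le_rfl ?_ ?_ ?_
      · intro r h1 h2 hrx
        exact hxn ⟨(M.sig ^ r) dp, by rw [vtx_sig_pow, hg1], hrx⟩
      · obtain ⟨t, ht1, ht2, ht3⟩ := index_exists dp dp rfl
        exact ⟨t, ht1, ht2, by rw [ht3, hdp2]⟩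
      · obtain ⟨t, ht1, ht2, ht3⟩ := index_exists dp dq (by rw [hdq1, hg1])
        exact ⟨t, ht1, ht2, by rw [ht3, hdq2]⟩
  · -- z and x both on the boundary
    obtain ⟨o, ho, hvo⟩ := hbz
    set g := M.gd o with hgdef
    have hg1 : M.vtx g = z := by rw [hgdef, vtx_gd, hvo]
    have hgap : ∀ t, 1 ≤ t → t < M.mp g → ¬ M.outer (M.alf ((M.sig ^ t) g)) := by
      intro t h1 h2 hout
      have heq : (M.sig ^ t) g = M.gd o :=
        bad_dart ho (by rw [vtx_sig_pow, hg1, hvo]) hout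
      have : t = M.mp g := by
        refine index_inj h1 (by omega) (mp_pos g) le_rfl ?_
        rw [sig_mp, heq, hgdef]
      omega
    by_cases hxn : ∃ dx, M.vtx dx = z ∧ M.vtx (M.alf dx) = x
    · obtain ⟨dx, hdx1, hdx2⟩ := hxn
      have hzx : z ≠ x := by rw [← hdx1, ← hdx2]; exact (M.hnoloop dx).symm
      have hadjzx : M.G.Adj z x := by
        have := adj_dart dx; rwa [hdx1, hdx2] at this
      obtain ⟨d, hdo, hd⟩ := hnc z x ⟨o, ho, hvo⟩ hbx hadjzx
      rcases hd with ⟨hd1, hd2⟩ | ⟨hd1, hd2⟩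
      · -- d = o : x is the successor of z, position 1
        have hdo' : d = o := outer_unique hdo ho (by rw [hd1, hvo])
        have hn1 : M.vtx (M.alf ((M.sig ^ 1) g)) = x := by
          rw [pow_one, hgdef, sig_gd, ← hdo', hd2]
        refine link_core hg1 hgap 2 (M.mp g) (by omega) le_rfl ?_ ?_ ?_
        · intro r h1 h2 hrx
          have : r = 1 := nb_inj (by omega) h2 (by omega) (mp_pos g) (by rw [hrx, hn1])
          omega
        · obtain ⟨t, ht1, ht2, ht3⟩ := index_exists g dp (by rw [hdp1, hg1])
          refine ⟨t, ?_, ht2, by rw [ht3, hdp2]⟩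
          rcases eq_or_lt_of_le ht1 with h | h
          · exfalso; rw [h, ht3, hdp2] at hn1; exact hpx hn1
          · omega
        · obtain ⟨t, ht1, ht2, ht3⟩ := index_exists g dq (by rw [hdq1, hg1])
          refine ⟨t, ?_, ht2, by rw [ht3, hdq2]⟩
          rcases eq_or_lt_of_le ht1 with h | h
          · exfalso; rw [h, ht3, hdq2] at hn1; exact hqx hn1
          · omega
      · -- x is the predecessor of z, position m
        have hphid : M.phi d = o := by
          refine outer_unique (outer_phi hdo) ho ?_
          rw [vtx_phi, hd2, hvo]
        have hgd : g = M.alf d := by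
          rw [hgdef]
          show M.alf (M.phi⁻¹ o) = M.alf d
          rw [← hphid, Equiv.Perm.inv_apply_self]
        have hnm : M.vtx (M.alf ((M.sig ^ M.mp g) g)) = x := by
          rw [sig_mp, hgd, M.hinv, hd1]
        refine link_core hg1 hgap 1 (M.mp g - 1) le_rfl (by omega) ?_ ?_ ?_
        · intro r h1 h2 hrx
          have : r = M.mp g := nb_inj h1 (by omega) (mp_pos g) le_rfl (by rw [hrx, hnm])
          have := mp_pos (M := M) g
          omega
        · obtain ⟨t, ht1, ht2, ht3⟩ := index_exists g dp (by rw [hdp1, hg1])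
          refine ⟨t, ht1, ?_, by rw [ht3, hdp2]⟩
          rcases eq_or_lt_of_le ht2 with rfl | h
          · exfalso; rw [ht3, hdp2] at hnm; exact hpx hnm
          · omega
        · obtain ⟨t, ht1, ht2, ht3⟩ := index_exists g dq (by rw [hdq1, hg1])
          refine ⟨t, ht1, ?_, by rw [ht3, hdq2]⟩
          rcases eq_or_lt_of_le ht2 with rfl | h
          · exfalso; rw [ht3, hdq2] at hnm; exact hqx hnm
          · omega
    · refine link_core hg1 hgap 1 (M.mp g) le_rfl le_rfl ?_ ?_ ?_
      · intro r h1 h2 hrx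
        exact hxn ⟨(M.sig ^ r) g, by rw [vtx_sig_pow, hg1], hrx⟩
      · obtain ⟨t, ht1, ht2, ht3⟩ := index_exists g dp (by rw [hdp1, hg1])
        exact ⟨t, ht1, ht2, by rw [ht3, hdp2]⟩
      · obtain ⟨t, ht1, ht2, ht3⟩ := index_exists g dq (by rw [hdq1, hg1])
        exact ⟨t, ht1, ht2, by rw [ht3, hdq2]⟩

def rel1 (M : PMap) (x : M.V) (u v : M.V) : Prop := M.G.Adj u v ∧ u ≠ x ∧ v ≠ x

lemma reroute (x z : M.V)
    (hlink : ∀ p q, M.G.Adj z p → M.G.Adj z q → p ≠ x → q ≠ x →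
      Relation.ReflTransGen (rel2 M x z) p q)
    {a b : M.V} (ha : a ≠ x) (haz : a ≠ z) (hb : b ≠ x) (hbz : b ≠ z)
    (h : Relation.ReflTransGen (rel1 M x) a b) :
    Relation.ReflTransGen (rel2 M x z) a b := by
  have key : ∀ c, Relation.ReflTransGen (rel1 M x) a c →
      (c ≠ z → Relation.ReflTransGen (rel2 M x z) a c) ∧
      (c = z → ∃ p, p ≠ x ∧ p ≠ z ∧ M.G.Adj z p ∧
        Relation.ReflTransGen (rel2 M x z) a p) := by
    intro c hc
    induction hc with
    | refl => exact ⟨fun _ => .refl, fun h => absurd h haz⟩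
    | @tail c' b' hac hstep ih =>
      obtain ⟨hadj, hcx, hbx'⟩ := hstep
      constructor
      · intro hbz'
        by_cases hcz : c' = z
        · subst hcz
          obtain ⟨p, hpx, hpz, hzp, hap⟩ := ih.2 rfl
          exact hap.trans (hlink p b' hzp hadj hpx hbx')
        · exact Relation.ReflTransGen.tail (ih.1 hcz) ⟨hadj, hcx, hcz, hbx', hbz'⟩
      · intro hbz'
        subst hbz'
        have hcz := hadj.ne
        exact ⟨c', hcx, hcz, hadj.symm, ih.1 hcz⟩
  exact (key b h).1 hbz

def ThreeConn (M : PMap) : Prop :=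
  ∀ S : Set M.V, S.ncard ≤ 2 → (M.G.induce Sᶜ).Connected

theorem card_V_ge (M : PMap) (houter_card : 4 ≤ {v : M.V | M.bnd v}.ncard) :
    4 ≤ Fintype.card M.V := by
  refine le_trans houter_card ?_
  have := Set.ncard_le_ncard (Set.subset_univ {v : M.V | M.bnd v}) Set.finite_univ
  simpa [Set.ncard_univ] using this

theorem main_backward (hnc : M.NoChord)
    (h2conn : ∀ S : Set M.V, S.ncard ≤ 1 → (M.G.induce Sᶜ).Connected)
    (houter_card : 4 ≤ {v : M.V | M.bnd v}.ncard) :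
    M.ThreeConn := by
  intro S hS2
  rcases Nat.lt_or_ge S.ncard 2 with h | h
  · exact h2conn S (by omega)
  · have hS : S.ncard = 2 := le_antisymm hS2 h
    obtain ⟨x, y, hxy, rfl⟩ := Set.ncard_eq_two.1 hS
    obtain ⟨w, z, hwz, hSwz, hcase⟩ :
        ∃ w z : M.V, w ≠ z ∧ ({x, y} : Set M.V) = {w, z} ∧
          (¬ M.bnd z ∨ (M.bnd z ∧ M.bnd w)) := by
      by_cases hby : M.bnd y
      · by_cases hbx : M.bnd x
        · exact ⟨x, y, hxy, rfl, Or.inr ⟨hby, hbx⟩⟩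
        · exact ⟨y, x, hxy.symm, Set.pair_comm x y, Or.inl hbx⟩
      · exact ⟨x, y, hxy, rfl, Or.inl hby⟩
    rw [hSwz]
    have hcard : 4 ≤ Fintype.card M.V := card_V_ge M houter_card
    have hne : (({w, z} : Set M.V)ᶜ).Nonempty := by
      by_contra hempty
      rw [Set.not_nonempty_iff_eq_empty, Set.compl_empty_iff] at hempty
      have h2 : ({w, z} : Set M.V).ncard = 2 := Set.ncard_pair hwz
      rw [hempty, Set.ncard_univ] at h2
      have : Nat.card M.V = Fintype.card M.V := Nat.card_eq_fintype_card
      omega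
    refine induce_of_reach _ _ hne ?_
    intro a b ha hb
    simp only [Set.mem_compl_iff, Set.mem_insert_iff, Set.mem_singleton_iff,
      not_or] at ha hb
    obtain ⟨haw, haz⟩ := ha
    obtain ⟨hbw, hbz⟩ := hb
    have hcw : (M.G.induce ({w} : Set M.V)ᶜ).Connected :=
      h2conn {w} (by simp)
    have hbase := reach_of_induce M.G ({w} : Set M.V)ᶜ hcw a b
      (by simpa using haw) (by simpa using hbw)
    have hbase1 : Relation.ReflTransGen (rel1 M w) a b := by
      refine Relation.ReflTransGen.mono ?_ _ _ hbase
      rintro u v ⟨h1, h2, h3⟩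
      exact ⟨h1, by simpa using h2, by simpa using h3⟩
    have h2 := reroute w z
      (fun p q hzp hzq hpx hqx => link_connect hnc z w hcase p q hzp hzq hpx hqx)
      haw haz hbw hbz hbase1
    refine Relation.ReflTransGen.mono ?_ _ _ h2
    rintro u v ⟨h1, h2, h3, h4, h5⟩
    refine ⟨h1, ?_, ?_⟩ <;> simp [h2, h3, h4, h5]

section Homology
variable {M : PMap}

def E (M : PMap) : Type := Quot (fun a b : M.D => M.alf a = b)
def F (M : PMap) : Type := Quot (fun a b : M.D => (M.sig * M.alf) a = b)

instance : Finite M.E := Finite.of_surjective (Quot.mk _) Quot.exists_rep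
instance : Finite M.F := Finite.of_surjective (Quot.mk _) Quot.exists_rep
noncomputable instance : Fintype M.E := Fintype.ofFinite _
noncomputable instance : Fintype M.F := Fintype.ofFinite _

def emk (M : PMap) (d : M.D) : M.E := Quot.mk _ d
def fmk (M : PMap) (d : M.D) : M.F := Quot.mk _ d

lemma emk_alf (d : M.D) : M.emk (M.alf d) = M.emk d := by
  symm
  exact Quot.sound rfl

lemma emk_eq {d e : M.D} (h : M.emk d = M.emk e) : e = d ∨ e = M.alf d := by
  have key : ∀ q : M.E, q = M.emk d → ∀ w, q = M.emk w → (w = d ∨ w = M.alf d) := by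
    intro q hq
    subst hq
    have lift_ok : ∀ a b : M.D, M.alf a = b →
        ((a = d ∨ a = M.alf d) = (b = d ∨ b = M.alf d)) := by
      intro a b hab
      subst hab
      apply propext
      constructor
      · rintro (rfl | rfl)
        · exact Or.inr rfl
        · exact Or.inl (M.hinv d)
      · rintro (h | h)
        · right; rw [← h, M.hinv]
        · left
          have := congrArg M.alf h
          rwa [M.hinv, M.hinv] at this
    intro w hw
    have : Quot.lift (fun a => a = d ∨ a = M.alf d) lift_ok (M.emk d) := Or.inl rfl
    rw [hw] at this
    exact this
  exact key (M.emk d) rfl e h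

lemma fmk_phi (d : M.D) : M.fmk (M.phi d) = M.fmk d := by
  symm
  exact Quot.sound rfl

lemma fmk_phi_pow (n : ℕ) (d : M.D) : M.fmk ((M.phi ^ n) d) = M.fmk d := by
  induction n with
  | zero => rfl
  | succ n ih => rw [pow_succ', Equiv.Perm.mul_apply, fmk_phi, ih]

lemma fmk_sig_alf (d : M.D) : M.fmk (M.sig d) = M.fmk (M.alf d) := by
  have : M.phi (M.alf d) = M.sig d := by rw [phi_apply, M.hinv]
  rw [← this, fmk_phi]

lemma fmk_eq {d e : M.D} (h : M.fmk d = M.fmk e) : ∃ n, (M.phi ^ n) d = e := by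
  have lift_ok : ∀ a b : M.D, (M.sig * M.alf) a = b →
      ((∃ n, (M.phi ^ n) a = e) = (∃ n, (M.phi ^ n) b = e)) := by
    intro a b hab
    have hab' : M.phi a = b := hab
    apply propext
    constructor
    · rintro ⟨n, rfl⟩
      refine ⟨n + (orderOf M.phi - 1), ?_⟩
      have hord : 0 < orderOf M.phi := orderOf_pos _
      have h1 : M.phi ^ orderOf M.phi = 1 := pow_orderOf_eq_one _
      rw [← hab']
      calc (M.phi ^ (n + (orderOf M.phi - 1))) (M.phi a)
          = (M.phi ^ (n + (orderOf M.phi - 1)) * M.phi) a := rfl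
        _ = (M.phi ^ (n + orderOf M.phi)) a := by
            rw [← pow_succ]
            congr 2
            omega
        _ = (M.phi ^ n) a := by rw [pow_add, h1, mul_one]
    · rintro ⟨n, rfl⟩
      exact ⟨n + 1, by rw [pow_succ, Equiv.Perm.mul_apply, hab']⟩
  have : Quot.lift (fun a => ∃ n, (M.phi ^ n) a = e) lift_ok (M.fmk e) := ⟨0, rfl⟩
  rw [← h] at this
  exact this

lemma outer_iff_fmk {d : M.D} : M.outer d ↔ M.fmk M.d0 = M.fmk d := by
  constructor
  · rintro ⟨n, rfl⟩
    rw [fmk_phi_pow]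
  · intro h
    exact fmk_eq h

/-- the boundary map from faces to edges over GF(2) -/
noncomputable def Amap (M : PMap) : (M.F → ZMod 2) →ₗ[ZMod 2] (M.E → ZMod 2) where
  toFun x := Quot.lift (fun d => x (M.fmk d) + x (M.fmk (M.alf d)))
    (by
      intro a b hab
      have hba : b = M.alf a := hab.symm
      subst hba
      simp only [M.hinv]
      exact add_comm _ _)
  map_add' x y := by
    funext e
    induction e using Quot.ind with
    | _ d => show (x + y) (M.fmk d) + (x + y) (M.fmk (M.alf d)) = (x (M.fmk d) + x (M.fmk (M.alf d))) + (y (M.fmk d) + y (M.fmk (M.alf d))); simp [Pi.add_apply]; ring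
  map_smul' c x := by
    funext e
    induction e using Quot.ind with
    | _ d => show (c • x) (M.fmk d) + (c • x) (M.fmk (M.alf d)) = c • (x (M.fmk d) + x (M.fmk (M.alf d))); simp only [Pi.smul_apply, smul_eq_mul]; ring

lemma Amap_mk (x : M.F → ZMod 2) (d : M.D) :
    M.Amap x (M.emk d) = x (M.fmk d) + x (M.fmk (M.alf d)) := rfl

/-- the boundary map from edges to vertices over GF(2) -/
noncomputable def Bmap (M : PMap) : (M.E → ZMod 2) →ₗ[ZMod 2] (M.V → ZMod 2) where
  toFun y := fun v => ∑ d : M.D, if M.vtx d = v then y (M.emk d) else 0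
  map_add' x y := by
    funext v
    simp only [Pi.add_apply]
    rw [← Finset.sum_add_distrib]
    apply Finset.sum_congr rfl
    intro d _
    split <;> simp
  map_smul' c x := by
    funext v
    simp only [Pi.smul_apply, RingHom.id_apply, Finset.smul_sum]
    apply Finset.sum_congr rfl
    intro d _
    split <;> simp

lemma Bmap_apply (y : M.E → ZMod 2) (v : M.V) :
    M.Bmap y v = ∑ d : M.D, if M.vtx d = v then y (M.emk d) else 0 := rfl

lemma zmod2_self_add (a : ZMod 2) : a + a = 0 := by
  fin_cases a <;> decide

lemma B_comp_A (x : M.F → ZMod 2) : M.Bmap (M.Amap x) = 0 := by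
  funext v
  rw [Bmap_apply]
  have hsplit : ∀ d : M.D, (if M.vtx d = v then M.Amap x (M.emk d) else 0) =
      (if M.vtx d = v then x (M.fmk d) else 0) +
      (if M.vtx d = v then x (M.fmk (M.alf d)) else 0) := by
    intro d
    rw [Amap_mk]
    split <;> simp
  rw [Finset.sum_congr rfl (fun d _ => hsplit d), Finset.sum_add_distrib]
  have hre : ∑ d : M.D, (if M.vtx d = v then x (M.fmk (M.alf d)) else 0) =
      ∑ d : M.D, (if M.vtx d = v then x (M.fmk d) else 0) := by
    have := Equiv.sum_comp M.sig (fun d => if M.vtx d = v then x (M.fmk d) else 0)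
    rw [← this]
    apply Finset.sum_congr rfl
    intro d _
    rw [M.hvσ, fmk_sig_alf]
  rw [hre]
  show _ = (0 : M.V → ZMod 2) v
  simp [zmod2_self_add]

end Homology

section Homology2
variable {M : PMap}

lemma zmod2_eq_one {a : ZMod 2} (h : a ≠ 0) : a = 1 := by
  fin_cases a
  · exact absurd rfl h
  · rfl

lemma zmod2_add_eq_zero {a b : ZMod 2} (h : a + b = 0) : b = a := by
  have := congrArg (· + a) h
  simp only [zero_add] at this
  rw [add_comm a b] at this
  rw [← this, add_assoc, zmod2_self_add, add_zero]

/-- indicator of a vertex -/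
def vind (M : PMap) (w : M.V) : M.V → ZMod 2 := fun v => if w = v then 1 else 0

/-- indicator of an edge -/
def eind (M : PMap) (d : M.D) : M.E → ZMod 2 := fun e => if e = M.emk d then 1 else 0

lemma B_single (d : M.D) : M.Bmap (M.eind d) = M.vind (M.vtx d) + M.vind (M.vtx (M.alf d)) := by
  funext v
  rw [Bmap_apply]
  have hsub : ({d, M.alf d} : Finset M.D) ⊆ Finset.univ := Finset.subset_univ _
  rw [← Finset.sum_subset hsub ?side]
  case side =>
    intro e _ he
    simp only [Finset.mem_insert, Finset.mem_singleton] at he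
    push_neg at he
    have hne : ¬ (M.emk e = M.emk d) := by
      intro hq
      rcases emk_eq hq.symm with h | h
      · exact he.1 h
      · exact he.2 h
    have : M.eind d (M.emk e) = 0 := by
      unfold eind
      rw [if_neg hne]
    rw [this, ite_self]
  · rw [Finset.sum_pair (Ne.symm (M.hnf d))]
    have h1 : M.eind d (M.emk d) = 1 := by unfold eind; rw [if_pos rfl]
    have h2 : M.eind d (M.emk (M.alf d)) = 1 := by unfold eind; rw [if_pos (emk_alf d)]
    rw [h1, h2]
    simp [vind]

/-- the sum functional on vertex functions -/
noncomputable def sumF (M : PMap) : (M.V → ZMod 2) →ₗ[ZMod 2] ZMod 2 where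
  toFun f := ∑ v, f v
  map_add' f g := by simp [Finset.sum_add_distrib]
  map_smul' c f := by simp [Finset.mul_sum]

lemma sum_B (y : M.E → ZMod 2) : M.sumF (M.Bmap y) = 0 := by
  show ∑ v, M.Bmap y v = 0
  simp only [Bmap_apply]
  rw [Finset.sum_comm]
  have : ∀ d : M.D, ∑ v, (if M.vtx d = v then y (M.emk d) else 0) = y (M.emk d) := by
    intro d
    rw [Finset.sum_ite_eq (Finset.univ) (M.vtx d) (fun _ => y (M.emk d))]
    simp
  rw [Finset.sum_congr rfl (fun d _ => this d)]
  apply Finset.sum_involution (fun d _ => M.alf d)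
  · intro d _
    rw [emk_alf]
    exact zmod2_self_add _
  · intro d _ _
    exact M.hnf d
  · intro d _
    simp
  · intro d _
    exact M.hinv d

lemma pair_mem_range (u w : M.V) :
    M.vind u + M.vind w ∈ LinearMap.range M.Bmap := by
  have dart_ver : ∀ d e : M.D, M.vind (M.vtx d) + M.vind (M.vtx e) ∈
      LinearMap.range M.Bmap := by
    intro d e
    have := M.hconn d e
    induction this with
    | refl =>
      have : M.vind (M.vtx d) + M.vind (M.vtx d) = 0 := by
        funext v; exact zmod2_self_add _
      rw [this]
      exact Submodule.zero_mem _
    | @tail c b hac hstep ih =>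
      rcases hstep with h | h
      · rw [← h, M.hvσ]
        exact ih
      · subst h
        have key : M.vind (M.vtx d) + M.vind (M.vtx (M.alf c)) =
            (M.vind (M.vtx d) + M.vind (M.vtx c)) + M.Bmap (M.eind c) := by
          rw [B_single]
          funext v
          simp only [Pi.add_apply]
          rw [show M.vind (M.vtx d) v + M.vind (M.vtx c) v +
            (M.vind (M.vtx c) v + M.vind (M.vtx (M.alf c)) v) =
            M.vind (M.vtx d) v + ((M.vind (M.vtx c) v + M.vind (M.vtx c) v) +
              M.vind (M.vtx (M.alf c)) v) by ring]
          rw [zmod2_self_add, zero_add]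
        rw [key]
        exact Submodule.add_mem _ ih ⟨M.eind c, rfl⟩
  obtain ⟨d, rfl⟩ := M.hsurj u
  obtain ⟨e, rfl⟩ := M.hsurj w
  exact dart_ver d e

lemma zsum_le_range :
    LinearMap.ker M.sumF ≤ LinearMap.range M.Bmap := by
  intro f hf
  have hf' : ∑ v, f v = 0 := hf
  -- strong induction on support size
  have main : ∀ n : ℕ, ∀ f : M.V → ZMod 2, (Finset.univ.filter (fun v => f v ≠ 0)).card = n →
      (∑ v, f v = 0) → f ∈ LinearMap.range M.Bmap := by
    intro n
    induction n using Nat.strong_induction_on with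
    | _ n ih =>
      intro f hcard hsum
      rcases Finset.eq_empty_or_nonempty (Finset.univ.filter (fun v => f v ≠ 0)) with he | hne
      · have : f = 0 := by
          funext v
          by_contra hv
          have : v ∈ Finset.univ.filter (fun v => f v ≠ 0) := by
            simp only [Finset.mem_filter, Finset.mem_univ, true_and]
            exact hv
          rw [he] at this
          exact absurd this (Finset.notMem_empty v)
        rw [this]
        exact Submodule.zero_mem _
      · obtain ⟨u, hu⟩ := hne
        simp only [Finset.mem_filter, Finset.mem_univ, true_and] at hu
        have huv : f u = 1 := zmod2_eq_one hu
        -- find another support element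
        have hex : ∃ w, w ≠ u ∧ f w ≠ 0 := by
          by_contra hno
          push_neg at hno
          have : ∑ v, f v = f u := by
            apply Finset.sum_eq_single
            · intro w _ hw
              by_contra h0
              exact h0 (hno w hw)
            · intro h; exact absurd (Finset.mem_univ u) h
          rw [hsum, huv] at this
          exact one_ne_zero this.symm
        obtain ⟨w, hwu, hw⟩ := hex
        have hwv : f w = 1 := zmod2_eq_one hw
        set f' := f + M.vind u + M.vind w with hf'def
        have hval : ∀ v, v ≠ u → v ≠ w → f' v = f v := by
          intro v h1 h2
          simp only [hf'def, Pi.add_apply, vind]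
          rw [if_neg (Ne.symm h1), if_neg (Ne.symm h2), add_zero, add_zero]
        have hvu : f' u = 0 := by
          have h1 : f' u = f u + 1 := by simp [hf'def, vind, hwu]
          rw [h1, huv]
          exact zmod2_self_add 1
        have hvw : f' w = 0 := by
          have h1 : f' w = f w + 1 := by simp [hf'def, vind, Ne.symm hwu]
          rw [h1, hwv]
          exact zmod2_self_add 1
        have hsub : (Finset.univ.filter (fun v => f' v ≠ 0)) ⊆
            ((Finset.univ.filter (fun v => f v ≠ 0)).erase u).erase w := by
          intro v hv
          simp only [Finset.mem_filter, Finset.mem_univ, true_and] at hv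
          have hvu' : v ≠ u := by rintro rfl; exact hv hvu
          have hvw' : v ≠ w := by rintro rfl; exact hv hvw
          rw [Finset.mem_erase, Finset.mem_erase]
          refine ⟨hvw', hvu', ?_⟩
          simp only [Finset.mem_filter, Finset.mem_univ, true_and]
          rwa [hval v hvu' hvw'] at hv
        have hcard' : (Finset.univ.filter (fun v => f' v ≠ 0)).card < n := by
          calc (Finset.univ.filter (fun v => f' v ≠ 0)).card
              ≤ (((Finset.univ.filter (fun v => f v ≠ 0)).erase u).erase w).card :=
                Finset.card_le_card hsub
            _ < ((Finset.univ.filter (fun v => f v ≠ 0)).erase u).card := by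
                apply Finset.card_erase_lt_of_mem
                rw [Finset.mem_erase]
                refine ⟨hwu, ?_⟩
                simp only [Finset.mem_filter, Finset.mem_univ, true_and]
                exact hw
            _ ≤ (Finset.univ.filter (fun v => f v ≠ 0)).card := Finset.card_erase_le
            _ = n := hcard
        have hsum' : ∑ v, f' v = 0 := by
          have : ∑ v, f' v = (∑ v, f v) + (∑ v, M.vind u v) + (∑ v, M.vind w v) := by
            simp [hf'def, Finset.sum_add_distrib]
          rw [this, hsum]
          have hindsum : ∀ z : M.V, ∑ v, M.vind z v = 1 := by
            intro z
            unfold vind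
            rw [Finset.sum_ite_eq Finset.univ z (fun _ => (1 : ZMod 2))]
            simp
          rw [hindsum, hindsum]
          decide
        have hmem := ih _ hcard' f' rfl hsum'
        have : f = f' + (M.vind u + M.vind w) := by
          funext v
          simp only [hf'def, Pi.add_apply]
          rw [show f v + M.vind u v + M.vind w v + (M.vind u v + M.vind w v) =
            f v + ((M.vind u v + M.vind u v) + (M.vind w v + M.vind w v)) by ring]
          rw [zmod2_self_add, zmod2_self_add, add_zero, add_zero]
        rw [this]
        exact Submodule.add_mem _ hmem (pair_mem_range u w)
  exact main _ f rfl hf'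

end Homology2

section Homology3
variable {M : PMap}

def ones (M : PMap) : M.F → ZMod 2 := fun _ => 1

lemma A_ones : M.Amap M.ones = 0 := by
  funext e
  induction e using Quot.ind with
  | _ d =>
    show M.ones (M.fmk d) + M.ones (M.fmk (M.alf d)) = 0
    exact zmod2_self_add 1

lemma ones_ne_zero : M.ones ≠ (0 : M.F → ZMod 2) := by
  intro h
  have := congrFun h (M.fmk M.d0)
  simp [ones] at this

lemma ker_A_eq : LinearMap.ker M.Amap = Submodule.span (ZMod 2) {M.ones} := by
  apply le_antisymm
  · intro x hx
    have hx' : M.Amap x = 0 := hx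
    have hstep : ∀ d, x (M.fmk (M.alf d)) = x (M.fmk d) := by
      intro d
      have := congrFun hx' (M.emk d)
      rw [Amap_mk] at this
      exact zmod2_add_eq_zero this
    have hstep2 : ∀ d, x (M.fmk (M.sig d)) = x (M.fmk d) := by
      intro d
      rw [fmk_sig_alf]
      exact hstep d
    have hconst : ∀ d e : M.D, x (M.fmk d) = x (M.fmk e) := by
      intro d e
      have := M.hconn d e
      induction this with
      | refl => rfl
      | @tail c b hac hstep' ih =>
        rcases hstep' with h | h
        · rw [← h, hstep2]; exact ih
        · rw [← h, hstep]; exact ih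
    rw [Submodule.mem_span_singleton]
    refine ⟨x (M.fmk M.d0), ?_⟩
    funext q
    induction q using Quot.ind with
    | _ d =>
      show x (M.fmk M.d0) • M.ones (M.fmk d) = x (M.fmk d)
      rw [show M.ones (M.fmk d) = 1 from rfl, smul_eq_mul, mul_one]
      exact hconst M.d0 d
  · rw [Submodule.span_le, Set.singleton_subset_iff]
    exact LinearMap.mem_ker.2 A_ones

lemma sum_vind (z : M.V) : ∑ v, M.vind z v = 1 := by
  unfold vind
  rw [Finset.sum_ite_eq Finset.univ z (fun _ => (1 : ZMod 2))]
  simp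

lemma range_B_eq : LinearMap.range M.Bmap = LinearMap.ker M.sumF := by
  apply le_antisymm
  · rintro y ⟨z, rfl⟩
    exact LinearMap.mem_ker.2 (sum_B z)
  · exact zsum_le_range

lemma range_A_eq : LinearMap.range M.Amap = LinearMap.ker M.Bmap := by
  have hle : LinearMap.range M.Amap ≤ LinearMap.ker M.Bmap := by
    rintro y ⟨x, rfl⟩
    exact LinearMap.mem_ker.2 (B_comp_A x)
  have hVne : Nonempty M.V := ⟨M.vtx M.d0⟩
  -- rank computations
  have hrn1 := LinearMap.finrank_range_add_finrank_ker M.Amap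
  have hrn2 := LinearMap.finrank_range_add_finrank_ker M.Bmap
  have hrn3 := LinearMap.finrank_range_add_finrank_ker M.sumF
  rw [Module.finrank_pi] at hrn1 hrn2 hrn3
  have hkerA : Module.finrank (ZMod 2) (LinearMap.ker M.Amap) = 1 := by
    rw [ker_A_eq]
    exact finrank_span_singleton ones_ne_zero
  have hsumsurj : LinearMap.range M.sumF = ⊤ := by
    rw [LinearMap.range_eq_top]
    intro c
    refine ⟨c • M.vind (M.vtx M.d0), ?_⟩
    rw [map_smul]
    have : M.sumF (M.vind (M.vtx M.d0)) = 1 := sum_vind _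
    rw [this, smul_eq_mul, mul_one]
  have hrsum : Module.finrank (ZMod 2) (LinearMap.range M.sumF) = 1 := by
    rw [hsumsurj, finrank_top, Module.finrank_self]
  have hrB : Module.finrank (ZMod 2) (LinearMap.range M.Bmap) =
      Module.finrank (ZMod 2) (LinearMap.ker M.sumF) := by
    rw [range_B_eq]
  -- Euler
  have heuler : (Fintype.card M.V : ℤ) - (Fintype.card M.E : ℤ)
      + (Fintype.card M.F : ℤ) = 2 := by
    have h := M.heuler
    have h1 : Nat.card (Quot (fun a b : M.D => M.alf a = b)) = Fintype.card M.E :=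
      (Nat.card_eq_fintype_card : Nat.card M.E = _)
    have h2 : Nat.card (Quot (fun a b : M.D => (M.sig * M.alf) a = b)) =
        Fintype.card M.F := (Nat.card_eq_fintype_card : Nat.card M.F = _)
    rw [h1, h2] at h
    exact h
  have hfin : Module.finrank (ZMod 2) (LinearMap.ker M.Bmap) ≤
      Module.finrank (ZMod 2) (LinearMap.range M.Amap) := by
    rw [hkerA] at hrn1
    rw [hrB] at hrn2
    omega
  exact Submodule.eq_of_le_of_finrank_le hle hfin

lemma cycle_decomp (y : M.E → ZMod 2) (hy : M.Bmap y = 0) :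
    ∃ x : M.F → ZMod 2, M.Amap x = y ∧ x (M.fmk M.d0) = 0 := by
  have : y ∈ LinearMap.range M.Amap := by
    rw [range_A_eq]
    exact LinearMap.mem_ker.2 hy
  obtain ⟨x, hx⟩ := this
  by_cases h0 : x (M.fmk M.d0) = 0
  · exact ⟨x, hx, h0⟩
  · refine ⟨x + M.ones, ?_, ?_⟩
    · rw [map_add, hx, A_ones, add_zero]
    · show x (M.fmk M.d0) + 1 = 0
      rw [zmod2_eq_one h0]
      exact zmod2_self_add 1

end Homology3

section Forward
variable {M : PMap}

lemma sig_pow_fix {d : M.D} (hfix : M.sig d = d) (n : ℕ) : (M.sig ^ n) d = d := by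
  induction n with
  | zero => rfl
  | succ n ih => rw [pow_succ', Equiv.Perm.mul_apply, ih, hfix]

lemma exists_third (h4 : 4 ≤ Fintype.card M.V) (a b : M.V) :
    ∃ w : M.V, w ≠ a ∧ w ≠ b := by
  by_contra h
  push_neg at h
  have hsub : (Set.univ : Set M.V) ⊆ {a, b} := by
    intro w _
    rcases eq_or_ne w a with rfl | hw
    · exact Set.mem_insert _ _
    · exact Set.mem_insert_iff.2 (Or.inr (h w hw))
  have h1 := Set.ncard_le_ncard hsub (Set.finite_singleton b |>.insert a)
  have h2 : ({a, b} : Set M.V).ncard ≤ 2 := by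
    apply le_trans (Set.ncard_insert_le _ _)
    rw [Set.ncard_singleton]
  rw [Set.ncard_univ, Nat.card_eq_fintype_card] at h1
  omega

lemma nofix (h2conn : ∀ S : Set M.V, S.ncard ≤ 1 → (M.G.induce Sᶜ).Connected)
    (h4 : 4 ≤ Fintype.card M.V) (d : M.D) : M.sig d ≠ d := by
  intro hfix
  have hdarts : ∀ e, M.vtx e = M.vtx d → e = d := by
    intro e he
    obtain ⟨n, hn⟩ := M.hfib d e he.symm
    rw [← hn, sig_pow_fix hfix]
  have huv : M.vtx (M.alf d) ≠ M.vtx d := M.hnoloop d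
  obtain ⟨w0, hw1, hw2⟩ := exists_third h4 (M.vtx (M.alf d)) (M.vtx d)
  have hconn := h2conn {M.vtx (M.alf d)} (by simp)
  have hreach := reach_of_induce M.G ({M.vtx (M.alf d)} : Set M.V)ᶜ hconn
    (M.vtx d) w0 (by simpa using huv.symm) (by simpa using hw1)
  rcases Relation.ReflTransGen.cases_head hreach with heq | ⟨c, hstep, _⟩
  · exact hw2 heq.symm
  · obtain ⟨hadj, _, hcmem⟩ := hstep
    obtain ⟨e, he1, he2⟩ := adj_norm hadj
    rw [hdarts e he1] at he2
    have hc' : c ≠ M.vtx (M.alf d) := by simpa using hcmem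
    exact hc' he2.symm

/-- minimal period of a dart under the face rotation -/
def mpf (M : PMap) (g : M.D) : ℕ := Function.minimalPeriod M.phi g

lemma mpf_pos (g : M.D) : 0 < M.mpf g := by
  apply Function.IsPeriodicPt.minimalPeriod_pos (n := orderOf M.phi) (orderOf_pos _)
  show Function.IsPeriodicPt _ _ _
  unfold Function.IsPeriodicPt Function.IsFixedPt
  rw [Equiv.Perm.iterate_eq_pow, pow_orderOf_eq_one]
  rfl

lemma phi_mpf (g : M.D) : (M.phi ^ M.mpf g) g = g := by
  have := Function.isPeriodicPt_minimalPeriod M.phi g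
  unfold Function.IsPeriodicPt Function.IsFixedPt at this
  rwa [Equiv.Perm.iterate_eq_pow] at this

lemma phi_pow_mod (g : M.D) (n : ℕ) : (M.phi ^ (n % M.mpf g)) g = (M.phi ^ n) g := by
  have := Function.iterate_mod_minimalPeriod_eq (f := ⇑M.phi) (x := g) (n := n)
  rwa [Equiv.Perm.iterate_eq_pow, Equiv.Perm.iterate_eq_pow] at this

lemma findex_inj {g : M.D} {s t : ℕ} (hs : s < M.mpf g) (ht : t < M.mpf g)
    (h : (M.phi ^ s) g = (M.phi ^ t) g) : s = t := by
  have hinj := Function.iterate_injOn_Iio_minimalPeriod (f := ⇑M.phi) (x := g)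
  apply hinj (Set.mem_Iio.2 hs) (Set.mem_Iio.2 ht)
  show (⇑M.phi)^[s] g = (⇑M.phi)^[t] g
  rw [Equiv.Perm.iterate_eq_pow, Equiv.Perm.iterate_eq_pow]
  exact h

lemma findex_exists {du e : M.D} (hdu : M.outer du) (he : M.outer e) :
    ∃ t, t < M.mpf du ∧ (M.phi ^ t) du = e := by
  obtain ⟨m, hm⟩ := hdu
  obtain ⟨n, hn⟩ := he
  set c := orderOf M.phi with hc
  have hcpos : 0 < c := orderOf_pos _
  have hcone : M.phi ^ c = 1 := pow_orderOf_eq_one _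
  have hd0 : (M.phi ^ (c - m % c)) du = M.d0 := by
    rw [← hm, ← Equiv.Perm.mul_apply, ← pow_add]
    have harith : c - m % c + m = c * (1 + m / c) := by
      have h1 := Nat.mod_add_div m c
      have h2 : m % c < c := Nat.mod_lt _ hcpos
      have h3 : c * (1 + m / c) = c + c * (m / c) := by ring
      omega
    rw [harith, pow_mul, hcone, one_pow]
    rfl
  have : (M.phi ^ (n + (c - m % c))) du = e := by
    rw [pow_add, Equiv.Perm.mul_apply, hd0, hn]
  exact ⟨(n + (c - m % c)) % M.mpf du, Nat.mod_lt _ (mpf_pos du),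
    by rw [phi_pow_mod, this]⟩

lemma arc_inj {du : M.D} (hdu : M.outer du) {s t : ℕ}
    (hs : s < M.mpf du) (ht : t < M.mpf du)
    (h : M.vtx ((M.phi ^ s) du) = M.vtx ((M.phi ^ t) du)) : s = t :=
  findex_inj hs ht (outer_unique (outer_phi_pow s hdu) (outer_phi_pow t hdu) h)

lemma mpf_ge {du : M.D} (hdu : M.outer du)
    (houter_card : 4 ≤ {v : M.V | M.bnd v}.ncard) : 4 ≤ M.mpf du := by
  have hsub : {v : M.V | M.bnd v} ⊆
      (fun t => M.vtx ((M.phi ^ t) du)) '' ↑(Finset.range (M.mpf du)) := by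
    rintro v ⟨e, he, rfl⟩
    obtain ⟨t, ht, rfl⟩ := findex_exists hdu he
    exact ⟨t, by simpa using ht, rfl⟩
  have h1 := Set.ncard_le_ncard hsub
    ((Finset.range (M.mpf du)).finite_toSet.image _)
  have h2 := Set.ncard_image_le (f := fun t => M.vtx ((M.phi ^ t) du))
    (Finset.range (M.mpf du)).finite_toSet
  rw [Set.ncard_coe_finset, Finset.card_range] at h2
  omega

lemma char2_telescope (f : ℕ → (M.V → ZMod 2)) (k : ℕ) :
    ∑ t ∈ Finset.range k, (f t + f (t + 1)) = f 0 + f k := by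
  induction k with
  | zero =>
    rw [Finset.range_zero, Finset.sum_empty]
    funext v
    exact (zmod2_self_add _).symm
  | succ k ih =>
    rw [Finset.sum_range_succ, ih]
    funext v
    simp only [Pi.add_apply]
    rw [show f 0 v + f k v + (f k v + f (k+1) v) =
      f 0 v + ((f k v + f k v) + f (k+1) v) by ring, zmod2_self_add, zero_add]

end Forward

theorem main_forward (M : PMap) (h4 : 4 ≤ Fintype.card M.V) (h3 : M.ThreeConn)
    (h2conn : ∀ S : Set M.V, S.ncard ≤ 1 → (M.G.induce Sᶜ).Connected)
    (houter_card : 4 ≤ {v : M.V | M.bnd v}.ncard) :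
    M.NoChord := by
  intro u v hbu hbv hadj
  by_contra hno
  obtain ⟨c, hvc1, hvc2⟩ := adj_norm hadj
  have hcno : ¬ M.outer c := fun h => hno ⟨c, h, Or.inl ⟨hvc1, hvc2⟩⟩
  have hacno : ¬ M.outer (M.alf c) := fun h =>
    hno ⟨M.alf c, h, Or.inr ⟨hvc2, by rw [M.hinv]; exact hvc1⟩⟩
  obtain ⟨du, hdu, hvdu⟩ := hbu
  obtain ⟨dv, hdv, hvdv⟩ := hbv
  have hne : u ≠ v := hadj.ne
  set b := M.mpf du with hbdef
  have hb4 : 4 ≤ b := mpf_ge hdu houter_card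
  obtain ⟨k, hkb, hkdv⟩ := findex_exists hdu hdv
  have hk0 : k ≠ 0 := by
    rintro rfl
    rw [pow_zero] at hkdv
    apply hne
    rw [← hvdu, ← hvdv, ← hkdv]
    rfl
  have hk1 : k ≠ 1 := by
    rintro rfl
    apply hno
    refine ⟨du, hdu, Or.inl ⟨hvdu, ?_⟩⟩
    rw [show M.vtx (M.alf du) = M.vtx (M.phi du) from (vtx_phi du).symm,
      show M.phi du = (M.phi ^ 1) du by rw [pow_one], hkdv, hvdv]
  have hkb1 : k ≠ b - 1 := by
    intro h
    apply hno
    refine ⟨dv, hdv, Or.inr ⟨hvdv, ?_⟩⟩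
    have h1 : M.phi dv = du := by
      rw [← hkdv, ← Equiv.Perm.mul_apply, ← pow_succ', show k + 1 = b by omega]
      exact phi_mpf du
    rw [show M.vtx (M.alf dv) = M.vtx (M.phi dv) from (vtx_phi dv).symm, h1, hvdu]
  have hk2 : 2 ≤ k := by omega
  have hkb2 : k ≤ b - 2 := by omega
  -- the GF(2) cycle: chord + boundary arc from u to v
  set yZ : M.E → ZMod 2 :=
    M.eind c + ∑ t ∈ Finset.range k, M.eind ((M.phi ^ t) du) with hyZ
  have hyZ_apply : ∀ q, yZ q =
      M.eind c q + ∑ t ∈ Finset.range k, M.eind ((M.phi ^ t) du) q := by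
    intro q
    rw [hyZ]
    simp [Finset.sum_apply]
  have hB : M.Bmap yZ = 0 := by
    rw [hyZ, map_add, map_sum]
    have h1 : M.Bmap (M.eind c) = M.vind u + M.vind v := by
      rw [B_single, hvc1, hvc2]
    have h2 : ∀ t, M.Bmap (M.eind ((M.phi ^ t) du)) =
        (fun r => M.vind (M.vtx ((M.phi ^ r) du))) t +
        (fun r => M.vind (M.vtx ((M.phi ^ r) du))) (t + 1) := by
      intro t
      rw [B_single]
      congr 1
      show M.vind (M.vtx (M.alf ((M.phi ^ t) du))) = _
      rw [← vtx_phi, ← Equiv.Perm.mul_apply, ← pow_succ']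
    rw [h1, Finset.sum_congr rfl (fun t _ => h2 t), char2_telescope]
    have e0 : M.vtx ((M.phi ^ 0) du) = u := by rw [pow_zero]; exact hvdu
    have ek : M.vtx ((M.phi ^ k) du) = v := by rw [hkdv]; exact hvdv
    rw [e0, ek]
    funext w
    simp only [Pi.add_apply, Pi.zero_apply]
    rw [show M.vind u w + M.vind v w + (M.vind u w + M.vind v w) =
      (M.vind u w + M.vind u w) + (M.vind v w + M.vind v w) by ring,
      zmod2_self_add, zmod2_self_add, add_zero]
  obtain ⟨x, hAx, hx0⟩ := cycle_decomp yZ hB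
  have hside_alf : ∀ d, x (M.fmk (M.alf d)) = x (M.fmk d) + yZ (M.emk d) := by
    intro d
    have h := congrFun hAx (M.emk d)
    rw [Amap_mk] at h
    rw [← h, ← add_assoc, zmod2_self_add, zero_add]
  have hside_outer : ∀ d, M.outer d → x (M.fmk d) = 0 := by
    intro d hd
    rw [← outer_iff_fmk.1 hd]
    exact hx0
  set VZ : Set M.V :=
    {u, v} ∪ {w | ∃ t, 1 ≤ t ∧ t ≤ k - 1 ∧ M.vtx ((M.phi ^ t) du) = w} with hVZ
  have huVZ : u ∈ VZ := Or.inl (Set.mem_insert _ _)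
  have hvVZ : v ∈ VZ := Or.inl (Set.mem_insert_iff.2 (Or.inr rfl))
  -- Z-values vanish off VZ
  have hLz0 : ∀ d : M.D, M.vtx d ∉ VZ → yZ (M.emk d) = 0 := by
    intro d hd
    rw [hyZ_apply]
    have h1 : M.eind c (M.emk d) = 0 := by
      have hq : ¬ (M.emk d = M.emk c) := by
        intro hq
        rcases emk_eq hq with h | h
        · exact hd (by rw [← h, hvc1]; exact huVZ)
        · apply hd
          have : d = M.alf c := by rw [h, M.hinv]
          rw [this, hvc2]
          exact hvVZ
      simp [eind, hq]
    have h2 : ∀ t ∈ Finset.range k, M.eind ((M.phi ^ t) du) (M.emk d) = 0 := by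
      intro t ht
      rw [Finset.mem_range] at ht
      have hq : ¬ (M.emk d = M.emk ((M.phi ^ t) du)) := by
        intro hq
        rcases emk_eq hq with h | h
        · apply hd
          rw [← h]
          rcases Nat.eq_zero_or_pos t with rfl | htpos
          · rw [pow_zero]
            show M.vtx du ∈ VZ
            rw [hvdu]; exact huVZ
          · right; exact ⟨t, htpos, by omega, rfl⟩
        · apply hd
          have hd' : d = M.alf ((M.phi ^ t) du) := by rw [h, M.hinv]
          have hv' : M.vtx d = M.vtx ((M.phi ^ (t+1)) du) := by
            rw [hd', ← vtx_phi, ← Equiv.Perm.mul_apply, ← pow_succ']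
          rw [hv']
          rcases eq_or_lt_of_le (show t + 1 ≤ k by omega) with hk' | hk'
          · rw [hk', hkdv, hvdv]; exact hvVZ
          · right; exact ⟨t+1, by omega, by omega, rfl⟩
      simp [eind, hq]
    rw [h1, Finset.sum_eq_zero h2, add_zero]
  -- the "all darts but the outgoing boundary dart are on the inner side" lemma
  have block : ∀ s, 1 ≤ s → s ≤ k - 1 → ∀ e, M.vtx e = M.vtx ((M.phi ^ s) du) →
      e ≠ (M.phi ^ s) du → x (M.fmk e) = 1 := by
    intro s hs1 hs2 e hve hene
    have houter_o' : M.outer ((M.phi ^ s) du) := outer_phi_pow s hdu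
    have hsig_g' : M.sig (M.gd ((M.phi ^ s) du)) = (M.phi ^ s) du := sig_gd _
    have hvg' : M.vtx (M.gd ((M.phi ^ s) du)) = M.vtx ((M.phi ^ s) du) := vtx_gd _
    set o' := (M.phi ^ s) du with ho'
    set g' := M.gd o' with hg'
    have hg'eq : g' = M.alf ((M.phi ^ (s-1)) du) := by
      rw [hg']
      show M.alf (M.phi⁻¹ o') = _
      congr 1
      apply M.phi.injective
      rw [Equiv.Perm.apply_inv_self, ho', ← Equiv.Perm.mul_apply, ← pow_succ',
        show s - 1 + 1 = s by omega]
    have hsigfix : ∀ t, t < b → ¬ ((M.phi ^ (t+1)) du = M.alf ((M.phi ^ t) du)) := by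
      intro t _ heq
      have : M.sig (M.alf ((M.phi ^ t) du)) = M.alf ((M.phi ^ t) du) := by
        conv_lhs => rw [show M.sig (M.alf ((M.phi ^ t) du)) = M.phi ((M.phi ^ t) du) from rfl,
          ← Equiv.Perm.mul_apply, ← pow_succ', heq]
      exact nofix h2conn h4 _ this
    have hyo' : yZ (M.emk o') = 1 := by
      rw [hyZ_apply]
      have hchord : M.eind c (M.emk o') = 0 := by
        have hq : ¬ (M.emk o' = M.emk c) := by
          intro hq
          rcases emk_eq hq with h | h
          · exact hcno (h ▸ houter_o')
          · exact hacno (by rw [h, M.hinv]; exact houter_o')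
        simp [eind, hq]
      rw [hchord, zero_add, Finset.sum_eq_single s]
      · simp [eind, ho']
      · intro t htk htne
        rw [Finset.mem_range] at htk
        have hq : ¬ (M.emk o' = M.emk ((M.phi ^ t) du)) := by
          intro hq
          rcases emk_eq hq with h | h
          · exact htne (findex_inj (by omega) (by omega) h)
          · have hv' : M.vtx ((M.phi ^ t) du) = M.vtx ((M.phi ^ (s+1)) du) := by
              rw [h, ho', ← vtx_phi, ← Equiv.Perm.mul_apply, ← pow_succ']
            have hts : t = s + 1 := arc_inj hdu (by omega) (by omega) hv'
            rw [hts] at h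
            exact hsigfix s (by omega) h
        simp [eind, hq]
      · intro hs
        exact absurd (Finset.mem_range.2 (by omega)) hs
    have hemkg' : M.emk g' = M.emk ((M.phi ^ (s-1)) du) := by rw [hg'eq, emk_alf]
    have hyg' : yZ (M.emk g') = 1 := by
      rw [hemkg', hyZ_apply]
      have hchord : M.eind c (M.emk ((M.phi ^ (s-1)) du)) = 0 := by
        have hq : ¬ (M.emk ((M.phi ^ (s-1)) du) = M.emk c) := by
          intro hq
          rcases emk_eq hq with h | h
          · exact hcno (h ▸ outer_phi_pow (s-1) hdu)
          · exact hacno (by rw [h, M.hinv]; exact outer_phi_pow (s-1) hdu)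
        simp [eind, hq]
      rw [hchord, zero_add, Finset.sum_eq_single (s-1)]
      · simp [eind]
      · intro t htk htne
        rw [Finset.mem_range] at htk
        have hq : ¬ (M.emk ((M.phi ^ (s-1)) du) = M.emk ((M.phi ^ t) du)) := by
          intro hq
          rcases emk_eq hq with h | h
          · exact htne (findex_inj (by omega) (by omega) h)
          · have hv' : M.vtx ((M.phi ^ t) du) = M.vtx ((M.phi ^ s) du) := by
              rw [h, ← vtx_phi, ← Equiv.Perm.mul_apply, ← pow_succ',
                show s - 1 + 1 = s by omega]
            have hts : t = s := arc_inj hdu (by omega) (by omega) hv'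
            rw [hts] at h
            have h' : (M.phi ^ ((s-1)+1)) du = M.alf ((M.phi ^ (s-1)) du) := by
              rw [show s - 1 + 1 = s by omega, h]
            exact hsigfix (s-1) (by omega) h'
        simp [eind, hq]
      · intro hs
        exact absurd (Finset.mem_range.2 (by omega)) hs
    have hyother : ∀ t, 2 ≤ t → t < M.mp g' → yZ (M.emk ((M.sig ^ t) g')) = 0 := by
      intro t ht2 htm
      have hvt : M.vtx ((M.sig ^ t) g') = M.vtx o' := by rw [vtx_sig_pow, hvg']
      have hneo : (M.sig ^ t) g' ≠ o' := by
        intro heq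
        have : t = 1 := index_inj (by omega) (by omega) le_rfl (mp_pos g')
          (by rw [heq, pow_one, hsig_g'])
        omega
      have hneg : (M.sig ^ t) g' ≠ g' := by
        intro heq
        have : t = M.mp g' := index_inj (by omega) (by omega) (mp_pos g') le_rfl
          (by rw [heq, sig_mp])
        omega
      rw [hyZ_apply]
      have hchord : M.eind c (M.emk ((M.sig ^ t) g')) = 0 := by
        have hq : ¬ (M.emk ((M.sig ^ t) g') = M.emk c) := by
          intro hq
          rcases emk_eq hq with h | h
          · have : M.vtx ((M.phi ^ 0) du) = M.vtx ((M.phi ^ s) du) := by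
              rw [pow_zero, show M.vtx ((1 : Equiv.Perm M.D) du) = u from hvdu,
                ← ho', ← hvt, ← h, hvc1]
            have := arc_inj hdu (by omega) (by omega) this
            omega
          · have hce : (M.sig ^ t) g' = M.alf c := by rw [h, M.hinv]
            have : M.vtx ((M.phi ^ s) du) = M.vtx ((M.phi ^ k) du) := by
              rw [← ho', ← hvt, hce, hvc2, ← hvdv, hkdv]
            have := arc_inj hdu (by omega) (by omega) this
            omega
        simp [eind, hq]
      rw [hchord, zero_add]
      apply Finset.sum_eq_zero
      intro t' ht'
      rw [Finset.mem_range] at ht'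
      have hq : ¬ (M.emk ((M.sig ^ t) g') = M.emk ((M.phi ^ t') du)) := by
        intro hq
        rcases emk_eq hq with h | h
        · apply hneo
          exact outer_unique (h ▸ outer_phi_pow t' hdu) houter_o' (by rw [hvt])
        · have he' : (M.sig ^ t) g' = M.alf ((M.phi ^ t') du) := by rw [h, M.hinv]
          have hv' : M.vtx ((M.phi ^ (t'+1)) du) = M.vtx ((M.phi ^ s) du) := by
            rw [← ho', ← hvt, he', ← vtx_phi, ← Equiv.Perm.mul_apply, ← pow_succ']
          have hts : t' + 1 = s := arc_inj hdu (by omega) (by omega) hv'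
          apply hneg
          rw [he', hg'eq, show t' = s - 1 by omega]
      simp [eind, hq]
    have hblk : ∀ t, 2 ≤ t → t ≤ M.mp g' → x (M.fmk ((M.sig ^ t) g')) = 1 := by
      intro t ht2
      induction t, ht2 using Nat.le_induction with
      | base =>
        intro _
        have h21 : (M.sig ^ 2) g' = M.sig ((M.sig ^ 1) g') := by
          rw [← Equiv.Perm.mul_apply, ← pow_succ']
        rw [h21, fmk_sig_alf, hside_alf, pow_one, hsig_g']
        rw [hside_outer _ houter_o', zero_add]
        exact hyo'
      | succ t ht2' ih =>
        intro htm
        have h21 : (M.sig ^ (t+1)) g' = M.sig ((M.sig ^ t) g') := by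
          rw [← Equiv.Perm.mul_apply, ← pow_succ']
        rw [h21, fmk_sig_alf, hside_alf, ih (by omega),
          hyother t ht2' (by omega), add_zero]
    obtain ⟨t, ht1, ht2, hte⟩ := index_exists g' e (by rw [hve, ← hvg'])
    have htne1 : t ≠ 1 := by
      intro h
      rw [h, pow_one, hsig_g'] at hte
      exact hene hte.symm
    rw [← hte]
    exact hblk t (by omega) ht2
  -- side is constant at vertices off VZ
  have side_const : ∀ w, w ∉ VZ → ∀ d1, M.vtx d1 = w → x (M.fmk d1) = 0 →
      ∀ e, M.vtx e = w → x (M.fmk e) = 0 := by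
    intro w hw d1 hv1 hs1 e hve
    obtain ⟨n, hn⟩ := M.hfib d1 e (by rw [hv1, hve])
    rw [← hn]
    clear hn hve
    induction n with
    | zero => exact hs1
    | succ n ih =>
      have h21 : (M.sig ^ (n+1)) d1 = M.sig ((M.sig ^ n) d1) := by
        rw [← Equiv.Perm.mul_apply, ← pow_succ']
      rw [h21, fmk_sig_alf, hside_alf, ih, zero_add]
      apply hLz0
      rw [vtx_sig_pow, hv1]
      exact hw
  -- the walk between the two arcs
  have hb0VZ : M.vtx ((M.phi ^ 1) du) ∈ VZ := by
    right
    exact ⟨1, le_rfl, by omega, rfl⟩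
  have hconn' := h3 {u, v} (by rw [Set.ncard_pair hne])
  have ha0mem : M.vtx ((M.phi ^ (k+1)) du) ∈ ({u, v} : Set M.V)ᶜ := by
    simp only [Set.mem_compl_iff, Set.mem_insert_iff, Set.mem_singleton_iff, not_or]
    constructor
    · intro h
      have h0 : M.vtx ((M.phi ^ 0) du) = u := by rw [pow_zero]; exact hvdu
      have := arc_inj hdu (show k+1 < b by omega) (show 0 < b by omega)
        (by rw [h, h0])
      omega
    · intro h
      have hkv : M.vtx ((M.phi ^ k) du) = v := by rw [hkdv]; exact hvdv
      have := arc_inj hdu (show k+1 < b by omega) (show k < b by omega)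
        (by rw [h, hkv])
      omega
  have hb0mem : M.vtx ((M.phi ^ 1) du) ∈ ({u, v} : Set M.V)ᶜ := by
    simp only [Set.mem_compl_iff, Set.mem_insert_iff, Set.mem_singleton_iff, not_or]
    constructor
    · intro h
      have h0 : M.vtx ((M.phi ^ 0) du) = u := by rw [pow_zero]; exact hvdu
      have := arc_inj hdu (show 1 < b by omega) (show 0 < b by omega)
        (by rw [h, h0])
      omega
    · intro h
      have hkv : M.vtx ((M.phi ^ k) du) = v := by rw [hkdv]; exact hvdv
      have := arc_inj hdu (show 1 < b by omega) (show k < b by omega)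
        (by rw [h, hkv])
      omega
  have hreach := reach_of_induce M.G ({u, v} : Set M.V)ᶜ hconn' _ _ ha0mem hb0mem
  have key : ∀ w, Relation.ReflTransGen
      (fun p q => M.G.Adj p q ∧ p ∈ ({u, v} : Set M.V)ᶜ ∧ q ∈ ({u, v} : Set M.V)ᶜ)
      (M.vtx ((M.phi ^ (k+1)) du)) w →
      w ∉ VZ ∧ (∀ e, M.vtx e = w → x (M.fmk e) = 0) := by
    intro w hw
    induction hw with
    | refl =>
      have ha0VZ : M.vtx ((M.phi ^ (k+1)) du) ∉ VZ := by
        rintro (h | ⟨t, ht1, ht2, ht3⟩)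
        · exact ha0mem h
        · have := arc_inj hdu (show t < b by omega) (show k+1 < b by omega) ht3
          omega
      exact ⟨ha0VZ, fun e hve => side_const _ ha0VZ ((M.phi ^ (k+1)) du) rfl
        (hside_outer _ (outer_phi_pow _ hdu)) e hve⟩
    | @tail w' w'' hw' hstep ih =>
      obtain ⟨hadj', hw'mem, hw''mem⟩ := hstep
      obtain ⟨hw'nVZ, hw'side⟩ := ih
      obtain ⟨d1, hd11, hd12⟩ := adj_norm hadj'
      have hsd1 : x (M.fmk d1) = 0 := hw'side d1 hd11
      have hsd2 : x (M.fmk (M.alf d1)) = 0 := by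
        rw [hside_alf, hsd1, hLz0 d1 (by rw [hd11]; exact hw'nVZ), add_zero]
      by_cases hw''VZ : w'' ∈ VZ
      · exfalso
        have hw''uv : w'' ∉ ({u, v} : Set M.V) := hw''mem
        have hw''arc : ∃ s, 1 ≤ s ∧ s ≤ k - 1 ∧ M.vtx ((M.phi ^ s) du) = w'' := by
          rcases hw''VZ with h | h
          · exact absurd h hw''uv
          · exact h
        obtain ⟨s, hs1', hs2', hs3'⟩ := hw''arc
        have halfne : M.alf d1 ≠ (M.phi ^ s) du := by
          intro heq
          have hd1eq : d1 = M.alf ((M.phi ^ s) du) := by rw [← heq, M.hinv]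
          have hvw' : M.vtx d1 = M.vtx ((M.phi ^ (s+1)) du) := by
            rw [hd1eq, ← vtx_phi, ← Equiv.Perm.mul_apply, ← pow_succ']
          rcases eq_or_lt_of_le (show s + 1 ≤ k by omega) with hsk | hsk
          · apply hw'mem
            rw [← hd11, hvw', hsk, hkdv, hvdv]
            exact Set.mem_insert_iff.2 (Or.inr rfl)
          · apply hw'nVZ
            rw [← hd11, hvw']
            right
            exact ⟨s+1, by omega, by omega, rfl⟩
        have hb1 := block s hs1' hs2' (M.alf d1) (by rw [hd12]; exact hs3'.symm) halfne
        rw [hsd2] at hb1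
        exact one_ne_zero hb1.symm
      · exact ⟨hw''VZ, side_const _ hw''VZ (M.alf d1) hd12 hsd2⟩
  exact absurd hb0VZ (key _ hreach).1

end PMap
end ChordAux

/-- Let `G` be an internally triangulated plane graph (a 2-connected plane
graph, given as a combinatorial map with a distinguished dart `d₀` on the outer
face, every internal face a triangle) whose external boundary is a simple cycle
with at least 4 vertices.  Then `G` is 3-connected if and only if no edge of
`G` connects two non-consecutive vertices of the external boundary. -/
theorem stmt18 (V D : Type) [Fintype V] [Fintype D]
    (σ α : Equiv.Perm D) (vtx : D → V) (d₀ : D)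
    (hinv : ∀ d, α (α d) = d) (hnf : ∀ d, α d ≠ d)
    (hvσ : ∀ d, vtx (σ d) = vtx d)
    (hsurj : Function.Surjective vtx)
    (hfib : ∀ d e, vtx d = vtx e → ∃ n : ℕ, (σ ^ n) d = e)
    (hconn : ∀ d e : D, Relation.ReflTransGen (fun a b => σ a = b ∨ α a = b) d e)
    (heuler : (Fintype.card V : ℤ)
        - (Nat.card (Quot (fun a b : D => α a = b)) : ℤ)
        + (Nat.card (Quot (fun a b : D => (σ * α) a = b)) : ℤ) = 2)
    (hnoloop : ∀ d : D, vtx (α d) ≠ vtx d)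
    (hsimple : ∀ d e : D, vtx d = vtx e → vtx (α d) = vtx (α e) → e = d)
    -- every internal face (face not containing `d₀`) is a triangle
    (hint_tri : ∀ d : D, (¬ ∃ n : ℕ, ((σ * α) ^ n) d₀ = d) →
      ((σ * α) ^ 3) d = d ∧ (σ * α) d ≠ d)
    -- the external boundary is a simple cycle: it visits each vertex once
    (houter_simple : ∀ d e : D, (∃ n : ℕ, ((σ * α) ^ n) d₀ = d) →
      (∃ n : ℕ, ((σ * α) ^ n) d₀ = e) → vtx d = vtx e → d = e)
    -- the external boundary has at least 4 vertices
    (houter_card :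
      4 ≤ {v : V | ∃ d, (∃ n : ℕ, ((σ * α) ^ n) d₀ = d) ∧ vtx d = v}.ncard)
    -- `G` is 2-connected
    (h2conn : ∀ S : Set V, S.ncard ≤ 1 →
      ((SimpleGraph.fromRel (fun a b => ∃ d, vtx d = a ∧ vtx (α d) = b)).induce
        Sᶜ).Connected) :
    -- `G` is 3-connected iff no edge joins two non-consecutive boundary vertices
    ((4 ≤ Fintype.card V ∧ ∀ S : Set V, S.ncard ≤ 2 →
        ((SimpleGraph.fromRel
            (fun a b => ∃ d, vtx d = a ∧ vtx (α d) = b)).induce Sᶜ).Connected)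
      ↔
      (∀ u v : V,
        (∃ d, (∃ n : ℕ, ((σ * α) ^ n) d₀ = d) ∧ vtx d = u) →
        (∃ d, (∃ n : ℕ, ((σ * α) ^ n) d₀ = d) ∧ vtx d = v) →
        (SimpleGraph.fromRel (fun a b => ∃ d, vtx d = a ∧ vtx (α d) = b)).Adj u v →
        (∃ d, (∃ n : ℕ, ((σ * α) ^ n) d₀ = d) ∧
          ((vtx d = u ∧ vtx (α d) = v) ∨ (vtx d = v ∧ vtx (α d) = u))))) := by
  let M : PMap := ⟨V, D, ‹_›, ‹_›, σ, α, vtx, d₀, hinv, hnf, hvσ, hsurj, hfib, hconn,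
    heuler, hnoloop, hsimple, hint_tri, houter_simple⟩
  have hoc : 4 ≤ {v : M.V | M.bnd v}.ncard := houter_card
  have h2 : ∀ S : Set M.V, S.ncard ≤ 1 → (M.G.induce Sᶜ).Connected := h2conn
  constructor
  · rintro ⟨h4, h3⟩
    exact fun u v hu hv hadj => M.main_forward h4 h3 h2 hoc u v hu hv hadj
  · intro hnc
    exact ⟨M.card_V_ge hoc, M.main_backward hnc h2 hoc⟩
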